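/- Let G be an ordered valued group satisfying the growth axiom (GA). Let h, g, ε ∈ G with h > 1, g > 1, ε > 1, g ≺ h and ε < g. Then ⁅h⁻¹,g⁻¹⁆ ≥ ⁅h⁻¹,ε⁻¹⁆ in the order, and ⁅h⁻¹,ε⁻¹⁆ ⪯ ⁅h⁻¹,g⁻¹⁆, where ⁅a,b⁆ := a⁻¹*b⁻¹*a*b. -/
import Mathlib


variable {G : Type*} [Group G] [LinearOrder G]

/-- `f ≺ g` : strict part of the dominance relation. -/
def vlt (le : G → G → Prop) (f g : G) : Prop := le f g ∧ ¬ le g f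

/-- `f ≍ g` : equivalence induced by the dominance relation. -/
def veq (le : G → G → Prop) (f g : G) : Prop := le f g ∧ le g f

/-- A dominance relation on a group `G`, making it a valued group:
a reflexive, transitive, total relation satisfying D1-D4. -/
structure IsValuation (le : G → G → Prop) : Prop where
  refl : ∀ f : G, le f f
  trans : ∀ f g h : G, le f g → le g h → le f h
  total : ∀ f g : G, le f g ∨ le g f
  d1 : ∀ f : G, f ≠ 1 → vlt le 1 f
  d2 : ∀ f g : G, le (f * g) f ∨ le (f * g) g
  d3 : ∀ f g h : G, le f g → le (h * f * h⁻¹) (h * g * h⁻¹)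
  d4 : ∀ f : G, veq le f f⁻¹

/-- The linear order makes `G` an ordered group and the valuation is compatible:
`1 < f ≤ g` implies `f ⪯ g`. -/
structure IsOrderedValuation (le : G → G → Prop) extends IsValuation le : Prop where
  mul_lt_mul_left : ∀ f g h : G, g < h → f * g < f * h
  mul_lt_mul_right : ∀ f g h : G, g < h → g * f < h * f
  le_of_lt_of_le : ∀ f g : G, 1 < f → f ≤ g → le f g

/-- The growth axiom GA: if `f > 1`, `g > 1` and `g ≺ f` then `f*g*f⁻¹ > g`. -/
def GrowthAxiom (le : G → G → Prop) : Prop :=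
  ∀ f g : G, 1 < f → 1 < g → vlt le g f → g < f * g * f⁻¹

/-- The commutator `⁅a,b⁆ = a⁻¹*b⁻¹*a*b`. -/
def brkt (a b : G) : G := a⁻¹ * b⁻¹ * a * b

/-- Lemma 4.12: in an ordered valued group satisfying GA, for positive `h, g, ε`
with `g ≺ h` and `ε < g`, one has `⁅h⁻¹,g⁻¹⁆ ≥ ⁅h⁻¹,ε⁻¹⁆` and
`⁅h⁻¹,ε⁻¹⁆ ⪯ ⁅h⁻¹,g⁻¹⁆`. -/
theorem commutator_ge_right (le : G → G → Prop) (hv : IsOrderedValuation le)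
    (hga : GrowthAxiom le) (h g ε : G)
    (hh : 1 < h) (hg : 1 < g) (he : 1 < ε)
    (hgh : vlt le g h) (heg : ε < g) :
    brkt h⁻¹ ε⁻¹ ≤ brkt h⁻¹ g⁻¹ ∧ le (brkt h⁻¹ ε⁻¹) (brkt h⁻¹ g⁻¹) := by
  have hLeg : le ε g := hv.le_of_lt_of_le ε g he heg.le
  have hεh : vlt le ε h :=
    ⟨hv.trans _ _ _ hLeg hgh.1, fun hc => hgh.2 (hv.trans _ _ _ hc hLeg)⟩
  have hk1 : 1 < ε⁻¹ * g := by
    have := hv.mul_lt_mul_left ε⁻¹ ε g heg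
    simpa using this
  have hkg : le (ε⁻¹ * g) g := by
    rcases hv.d2 ε⁻¹ g with h1 | h1
    · exact hv.trans _ _ _ (hv.trans _ _ _ h1 (hv.d4 ε).2) hLeg
    · exact h1
  have hkh : vlt le (ε⁻¹ * g) h :=
    ⟨hv.trans _ _ _ hkg hgh.1, fun hc => hgh.2 (hv.trans _ _ _ hc hkg)⟩
  have hgrow := hga h (ε⁻¹ * g) hh hk1 hkh
  have hεgrow := hga h ε hh he hεh
  have hpos : 1 < h * ε * h⁻¹ * ε⁻¹ := by
    have := hv.mul_lt_mul_right ε⁻¹ ε (h * ε * h⁻¹) hεgrow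
    simpa using this
  have hmain : h * ε * h⁻¹ * ε⁻¹ < h * g * h⁻¹ * g⁻¹ := by
    have s1 := hv.mul_lt_mul_left (h * ε * h⁻¹) _ _ hgrow
    have s2 := hv.mul_lt_mul_right g⁻¹ _ _ s1
    calc h * ε * h⁻¹ * ε⁻¹ = h * ε * h⁻¹ * (ε⁻¹ * g) * g⁻¹ := by group
    _ < h * ε * h⁻¹ * (h * (ε⁻¹ * g) * h⁻¹) * g⁻¹ := s2
    _ = h * g * h⁻¹ * g⁻¹ := by group
  have hbe : brkt (h⁻¹ : G) ε⁻¹ = h * ε * h⁻¹ * ε⁻¹ := by simp [brkt]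
  have hbg : brkt (h⁻¹ : G) g⁻¹ = h * g * h⁻¹ * g⁻¹ := by simp [brkt]
  rw [hbe, hbg]
  exact ⟨hmain.le, hv.le_of_lt_of_le _ _ hpos hmain.le⟩
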